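/- For any n×n complex matrix A and any x ∈ {-1,1}^n, the absolute value of the Glynn estimator satisfies |Gly_x(A)| ≤ ‖A‖^n, where ‖A‖ is the operator (spectral) norm of A. -/

import Mathlib

/-- The operator (spectral) 2-norm of a complex matrix. -/
noncomputable def opNorm {m k : ℕ} (A : Matrix (Fin m) (Fin k) ℂ) : ℝ :=
  ‖LinearMap.toContinuousLinearMap (Matrix.toEuclideanLin A)‖

/-- For any `n × n` complex matrix `A` and any `x ∈ {-1,1}^n`, the Glynn estimator
`Gly_x(A) = x_1⋯x_n ∏_i (∑_j a_{ij} x_j)` satisfies `|Gly_x(A)| ≤ ‖A‖^n`. -/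
theorem glynn_bound (n : ℕ) (A : Matrix (Fin n) (Fin n) ℂ)
    (x : Fin n → ℂ) (hx : ∀ i, x i = 1 ∨ x i = -1) :
    ‖(∏ i, x i) * ∏ i, ∑ j, A i j * x j‖ ≤ opNorm A ^ n := by
  have hx1 : ∀ i, ‖x i‖ = 1 := by
    intro i; rcases hx i with h | h <;> simp [h]
  set y : Fin n → ℂ := A.mulVec x with hy
  have hyi : ∀ i, (∑ j, A i j * x j) = y i := by
    intro i; simp [hy, Matrix.mulVec, dotProduct]
  have hN : 0 ≤ opNorm A := norm_nonneg _
  rcases Nat.eq_zero_or_pos n with hn | hn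
  · subst hn; simp
  -- the norm bound: ∑ |y i|² ≤ opNorm² * n
  have hsum : ∑ i, ‖y i‖ ^ 2 ≤ opNorm A ^ 2 * n := by
    have hv : ‖(WithLp.equiv 2 (Fin n → ℂ)).symm x‖ = Real.sqrt n := by
      rw [EuclideanSpace.norm_eq]
      simp only [WithLp.equiv_symm_apply, hx1]
      simp
    have hb := (LinearMap.toContinuousLinearMap (Matrix.toEuclideanLin A)).le_opNorm
      ((WithLp.equiv 2 (Fin n → ℂ)).symm x)
    rw [hv] at hb
    have hb' : ‖(WithLp.equiv 2 (Fin n → ℂ)).symm y‖ ≤ opNorm A * Real.sqrt n := by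
      have heq : (LinearMap.toContinuousLinearMap (Matrix.toEuclideanLin A))
          ((WithLp.equiv 2 (Fin n → ℂ)).symm x) = (WithLp.equiv 2 (Fin n → ℂ)).symm y := by
        rw [LinearMap.coe_toContinuousLinearMap', hy]
        exact Matrix.toEuclideanLin_apply_piLp_toLp A x
      rw [heq] at hb
      exact hb
    have h2 : ‖(WithLp.equiv 2 (Fin n → ℂ)).symm y‖ ^ 2 ≤ (opNorm A * Real.sqrt n) ^ 2 :=
      pow_le_pow_left₀ (norm_nonneg _) hb' 2
    have h3 : ‖(WithLp.equiv 2 (Fin n → ℂ)).symm y‖ ^ 2 = ∑ i, ‖y i‖ ^ 2 := by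
      rw [EuclideanSpace.norm_eq, Real.sq_sqrt (by positivity)]
      simp
    rw [h3] at h2
    calc ∑ i, ‖y i‖ ^ 2 ≤ (opNorm A * Real.sqrt n) ^ 2 := h2
      _ = opNorm A ^ 2 * n := by
          rw [mul_pow, Real.sq_sqrt (by positivity)]
  -- AM-GM
  have hz : ∀ i, (0:ℝ) ≤ ‖y i‖ ^ 2 := fun i => by positivity
  have hn' : (n:ℝ) ≠ 0 := Nat.cast_ne_zero.mpr hn.ne'
  have amgm := Real.geom_mean_le_arith_mean_weighted Finset.univ (fun _ => (n:ℝ)⁻¹)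
    (fun i => ‖y i‖ ^ 2) (fun i _ => by positivity)
    (by simp [hn']) (fun i _ => hz i)
  have hrhs : ∑ i, (n:ℝ)⁻¹ * ‖y i‖ ^ 2 ≤ opNorm A ^ 2 := by
    rw [← Finset.mul_sum]
    calc (n:ℝ)⁻¹ * ∑ i, ‖y i‖ ^ 2 ≤ (n:ℝ)⁻¹ * (opNorm A ^ 2 * n) := by
          apply mul_le_mul_of_nonneg_left hsum (by positivity)
      _ = opNorm A ^ 2 := by field_simp
  have hgm : ∏ i, (‖y i‖ ^ 2) ^ ((n:ℝ)⁻¹) ≤ opNorm A ^ 2 := le_trans amgm hrhs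
  have h1 : ∏ i, ‖y i‖ ^ 2 ≤ (opNorm A ^ 2) ^ n := by
    have := pow_le_pow_left₀ (Finset.prod_nonneg fun i _ => Real.rpow_nonneg (hz i) _) hgm n
    rw [← Finset.prod_pow] at this
    calc ∏ i, ‖y i‖ ^ 2
        = ∏ i, ((‖y i‖ ^ 2) ^ ((n:ℝ)⁻¹)) ^ n := by
          apply Finset.prod_congr rfl
          intro i _
          rw [← Real.rpow_natCast ((‖y i‖ ^ 2) ^ ((n:ℝ)⁻¹)) n,
            ← Real.rpow_mul (hz i), inv_mul_cancel₀ hn', Real.rpow_one]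
      _ ≤ (opNorm A ^ 2) ^ n := this
  have habs : ‖(∏ i, x i) * ∏ i, ∑ j, A i j * x j‖ = ∏ i, ‖y i‖ := by
    rw [norm_mul, norm_prod, norm_prod]
    simp [hx1, hyi]
  rw [habs]
  have key : (∏ i, ‖y i‖) ^ 2 ≤ (opNorm A ^ n) ^ 2 := by
    rw [← Finset.prod_pow]
    calc ∏ i, ‖y i‖ ^ 2 ≤ (opNorm A ^ 2) ^ n := h1
      _ = (opNorm A ^ n) ^ 2 := by ring
  exact (pow_le_pow_iff_left₀ (Finset.prod_nonneg fun i _ => norm_nonneg _)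
    (pow_nonneg hN n) two_ne_zero).mp key
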